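/- Let K ≥ 3, 0 ≤ k ≤ K−2, and let X be finite with distribution P_X. Suppose every source symbol x is assigned to a node class j(x) ∈ {0,…,K−2} and code length l_k(x), satisfying ∑_x (K−j(x))·(K−k)^{-1}·K^{-l_k(x)} = 1. Then the average code length L_k = ∑_x P_X(x)·l_k(x) satisfies L_k ≥ H_K(X) + ∑_{j=0}^{K-2} P(N_j^{(k)})·log_K((K−j)/(K−k)), where P(N_j^{(k)}) = ∑_{x: j(x)=j} P_X(x) and H_K(X) is the base-K entropy. -/
import Mathlib

open Finset in
lemma gibbs_aux {X : Type*} [Fintype X] (P q : X → ℝ) (hP : ∀ x, 0 ≤ P x)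
    (hq : ∀ x, 0 < q x) (hsum : ∑ x, q x ≤ ∑ x, P x) :
    ∑ x, P x * Real.log (q x) ≤ ∑ x, P x * Real.log (P x) := by
  have key : ∀ x : X, P x * Real.log (q x) - P x * Real.log (P x) ≤ q x - P x := by
    intro x
    rcases eq_or_lt_of_le (hP x) with h | h
    · simp [← h]
      exact (hq x).le
    · have : Real.log (q x / P x) ≤ q x / P x - 1 :=
        Real.log_le_sub_one_of_pos (div_pos (hq x) h)
      have := mul_le_mul_of_nonneg_left this (hP x)
      rw [Real.log_div (hq x).ne' h.ne', mul_sub, mul_sub, mul_div_cancel₀ _ h.ne', mul_one] at this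
      linarith
  have h1 : ∑ x, (P x * Real.log (q x) - P x * Real.log (P x)) ≤ ∑ x, (q x - P x) :=
    Finset.sum_le_sum fun x _ => key x
  rw [Finset.sum_sub_distrib, Finset.sum_sub_distrib] at h1
  linarith

open Finset in
/-- Lower bound for the average code length of a K-ary AIFV code tree T_k. -/
theorem stmt_3 {X : Type*} [Fintype X] (K k : ℕ) (hK : 3 ≤ K) (hk : k ≤ K - 2)
    (P : X → ℝ) (hP : ∀ x, 0 ≤ P x) (hPsum : ∑ x, P x = 1)
    (j : X → ℕ) (hj : ∀ x, j x ≤ K - 2) (l : X → ℕ)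
    (hKraft : ∑ x, ((K : ℝ) - j x) * ((K : ℝ) - k)⁻¹ * ((K : ℝ) ^ (l x))⁻¹ = 1) :
    ∑ x, P x * (l x : ℝ) ≥
      (-∑ x, P x * Real.logb K (P x)) +
        ∑ j' ∈ Finset.range (K - 1),
          (∑ x ∈ Finset.univ.filter (fun x => j x = j'), P x) *
            Real.logb K (((K : ℝ) - j') / ((K : ℝ) - k)) := by
  have hK1 : (1 : ℝ) < (K : ℝ) := by exact_mod_cast lt_of_lt_of_le (by norm_num) hK
  have hK0 : (0 : ℝ) < (K : ℝ) := by linarith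
  have hlogK : 0 < Real.log K := Real.log_pos hK1
  have hkK : (k : ℝ) < (K : ℝ) := by
    have : k < K := lt_of_le_of_lt hk (by omega)
    exact_mod_cast this
  have hjK : ∀ x, ((j x : ℝ)) < (K : ℝ) := by
    intro x
    have : j x < K := lt_of_le_of_lt (hj x) (by omega)
    exact_mod_cast this
  set q : X → ℝ := fun x => ((K : ℝ) - j x) * ((K : ℝ) - k)⁻¹ * ((K : ℝ) ^ (l x))⁻¹ with hqdef
  have hqpos : ∀ x, 0 < q x := by
    intro x
    apply mul_pos (mul_pos (by linarith [hjK x]) (inv_pos.2 (by linarith)))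
    exact inv_pos.2 (pow_pos hK0 _)
  set f : X → ℝ := fun x => Real.logb K (((K : ℝ) - j x) / ((K : ℝ) - k)) with hfdef
  have hlogq : ∀ x, Real.logb K (q x) = f x - l x := by
    intro x
    have h1 : q x = (((K : ℝ) - j x) / ((K : ℝ) - k)) * ((K : ℝ) ^ (l x))⁻¹ := by
      rw [hqdef, div_eq_mul_inv]
    rw [h1, Real.logb_mul (ne_of_gt (div_pos (by linarith [hjK x]) (by linarith)))
      (by positivity), Real.logb_inv, Real.logb_pow, Real.logb_self_eq_one hK1]
    simp [hfdef]
    ring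
  have hgibbs := gibbs_aux P q hP hqpos (by rw [hKraft, hPsum])
  have hgibbs' : ∑ x, P x * Real.logb K (q x) ≤ ∑ x, P x * Real.logb K (P x) := by
    have e1 : ∑ x, P x * Real.logb K (q x) = (∑ x, P x * Real.log (q x)) / Real.log K := by
      rw [Finset.sum_div]; congr 1; ext x; rw [Real.logb, mul_div_assoc]
    have e2 : ∑ x, P x * Real.logb K (P x) = (∑ x, P x * Real.log (P x)) / Real.log K := by
      rw [Finset.sum_div]; congr 1; ext x; rw [Real.logb, mul_div_assoc]
    rw [e1, e2]
    exact div_le_div_of_nonneg_right hgibbs hlogK.le |>.trans_eq rfl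
  have hsplit : ∑ x, P x * Real.logb K (q x) = ∑ x, P x * f x - ∑ x, P x * (l x : ℝ) := by
    rw [← Finset.sum_sub_distrib]
    congr 1; ext x; rw [hlogq x]; ring
  have hfiber : ∑ j' ∈ Finset.range (K - 1),
      (∑ x ∈ Finset.univ.filter (fun x => j x = j'), P x) *
        Real.logb K (((K : ℝ) - j') / ((K : ℝ) - k)) = ∑ x, P x * f x := by
    rw [← Finset.sum_fiberwise_of_maps_to (g := j) (t := Finset.range (K - 1)) (fun x _ => Finset.mem_range.2
      (by have := hj x; omega)) (fun x => P x * f x)]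
    apply Finset.sum_congr rfl
    intro j' _
    rw [Finset.sum_mul]
    apply Finset.sum_congr rfl
    intro x hx
    have : j x = j' := (Finset.mem_filter.1 hx).2
    simp [hfdef, this]
  rw [ge_iff_le, hfiber]
  rw [hsplit] at hgibbs'
  linarith
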